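/- arXiv:2108.08842 — 2 statements merged into one kernel-verified Lean document; each statement's English description precedes it below -/
import Mathlib

section
/- With the two-level quantizer Q(v) = ψ·sign(v) and unbiased scale S = ||x||_2^2/⟨Rx,Q(Rx)⟩, the normalized squared error ||x − S·R^{-1}Q(Rx)||_2^2 / ||x||_2^2 equals d·||x||_2^2/||Rx||_1^2 − 1, which depends only on the unit vector Rx/||Rx||_2; in particular it equals d/||T||_1^2 − 1 where T = Rx/||x||_2. -/
open Matrix RealInnerProductSpace

/-- The ±1 sign with the convention `sign 0 = +1`. -/
noncomputable def psign (y : ℝ) : ℝ := if 0 ≤ y then 1 else -1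

/-- Coordinatewise sign vector. -/
noncomputable def signVec {d : ℕ} (v : EuclideanSpace ℝ (Fin d)) :
    EuclideanSpace ℝ (Fin d) := WithLp.toLp 2 (fun i => psign (v i))

lemma mul_psign (y : ℝ) : y * psign y = |y| := by
  unfold psign
  rcases le_or_gt 0 y with h | h
  · simp [h, abs_of_nonneg h]
  · simp [not_le.2 h, abs_of_neg h]

lemma psign_sq (y : ℝ) : psign y ^ 2 = 1 := by
  unfold psign; split <;> norm_num

lemma inner_toEuclideanLin {d : ℕ} (M : Matrix (Fin d) (Fin d) ℝ)
    (hM : Mᵀ * M = 1) (u v : EuclideanSpace ℝ (Fin d)) :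
    ⟪Matrix.toEuclideanLin M u, Matrix.toEuclideanLin M v⟫ = ⟪u, v⟫ := by
  simp only [PiLp.inner_apply, RCLike.inner_apply, starRingEnd_apply, star_trivial]
  calc (∑ i, (Matrix.toEuclideanLin M v i) * (Matrix.toEuclideanLin M u i))
      = (∑ i, (Matrix.toEuclideanLin M u i) * (Matrix.toEuclideanLin M v i)) :=
        Finset.sum_congr rfl fun i _ => mul_comm _ _
    _ = (M *ᵥ (fun j => u j)) ⬝ᵥ (M *ᵥ fun j => v j) := rfl
    _ = ∑ i, u i * v i := by
        rw [Matrix.dotProduct_mulVec, ← Matrix.vecMul_transpose, Matrix.vecMul_vecMul, hM,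
          Matrix.vecMul_one]
        simp [dotProduct]
    _ = ∑ i, v i * u i := Finset.sum_congr rfl fun i _ => mul_comm _ _

lemma norm_toEuclideanLin {d : ℕ} (M : Matrix (Fin d) (Fin d) ℝ)
    (hM : Mᵀ * M = 1) (u : EuclideanSpace ℝ (Fin d)) :
    ‖Matrix.toEuclideanLin M u‖ = ‖u‖ := by
  have := inner_toEuclideanLin M hM u u
  rw [real_inner_self_eq_norm_sq, real_inner_self_eq_norm_sq] at this
  nlinarith [norm_nonneg (Matrix.toEuclideanLin M u), norm_nonneg u]

theorem drive_two_level_vnmse (d : ℕ) (R : Matrix (Fin d) (Fin d) ℝ)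
    (hR : Rᵀ * R = 1) (x : EuclideanSpace ℝ (Fin d)) (hx : x ≠ 0)
    (ψ : ℝ) (hψ : 0 < ψ)
    (hnz : ∀ i : Fin d, Matrix.toEuclideanLin R x i ≠ 0) :
    let Rx := Matrix.toEuclideanLin R x
    let Qv : EuclideanSpace ℝ (Fin d) := ψ • signVec Rx
    let S : ℝ := ‖x‖ ^ 2 / ⟪Rx, Qv⟫
    let T : EuclideanSpace ℝ (Fin d) := ‖x‖⁻¹ • Rx
    ‖x - S • Matrix.toEuclideanLin R⁻¹ Qv‖ ^ 2 / ‖x‖ ^ 2 =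
        d * ‖x‖ ^ 2 / (∑ i : Fin d, |Rx i|) ^ 2 - 1 ∧
      ‖x - S • Matrix.toEuclideanLin R⁻¹ Qv‖ ^ 2 / ‖x‖ ^ 2 =
        d / (∑ i : Fin d, |T i|) ^ 2 - 1 := by
  intro Rx Qv S T
  -- basic facts about R
  have hRR : R * Rᵀ = 1 := mul_eq_one_comm.mp hR
  have hRinv : R⁻¹ = Rᵀ := Matrix.inv_eq_left_inv hR
  have hRinvOrtho : (R⁻¹)ᵀ * R⁻¹ = 1 := by
    rw [hRinv, Matrix.transpose_transpose, hRR]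
  have hnx : ‖x‖ ≠ 0 := norm_ne_zero_iff.mpr hx
  -- L = ∑ |Rx i| and positivity
  set L : ℝ := ∑ i : Fin d, |Rx i| with hL
  have hd : 0 < d := by
    rcases Nat.eq_zero_or_pos d with h | h
    · exfalso; apply hx; subst h
      ext i; exact absurd i.2 (by simp)
    · exact h
  have hLpos : 0 < L := by
    have i0 : Fin d := ⟨0, hd⟩
    apply Finset.sum_pos' (fun i _ => abs_nonneg _)
    exact ⟨i0, Finset.mem_univ _, abs_pos.mpr (hnz i0)⟩
  -- inner product ⟪Rx, Qv⟫ = ψ * L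
  have hinner : ⟪Rx, Qv⟫ = ψ * L := by
    show ⟪Rx, ψ • signVec Rx⟫ = ψ * L
    rw [real_inner_smul_right]
    congr 1
    rw [hL]
    rw [show ⟪Rx, signVec Rx⟫ = ∑ i, Rx i * psign (Rx i) from by
      simp [PiLp.inner_apply, signVec, RCLike.inner_apply, mul_comm]
    ]
    exact Finset.sum_congr rfl fun i _ => mul_psign (Rx i)
  have hψL : ψ * L ≠ 0 := ne_of_gt (mul_pos hψ hLpos)
  -- ‖Qv‖² = ψ² d
  have hQv : ‖Qv‖ ^ 2 = ψ ^ 2 * d := by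
    rw [← real_inner_self_eq_norm_sq]
    show ⟪ψ • signVec Rx, ψ • signVec Rx⟫ = _
    rw [real_inner_smul_right, real_inner_smul_left]
    rw [show ⟪signVec Rx, signVec Rx⟫ = ∑ i : Fin d, psign (Rx i) * psign (Rx i) from by
      rw [PiLp.inner_apply]; simp [signVec, RCLike.inner_apply, sq]]
    have : ∀ i : Fin d, psign (Rx i) * psign (Rx i) = 1 := fun i => by
      have := psign_sq (Rx i); nlinarith
    rw [Finset.sum_congr rfl fun i _ => this i]
    simp; ring
  -- ‖Rx‖ = ‖x‖
  have hnRx : ‖Rx‖ = ‖x‖ := norm_toEuclideanLin R hR x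
  -- the error vector equals (R⁻¹) applied to (Rx - S • Qv)
  have hRinvRx : Matrix.toEuclideanLin R⁻¹ Rx = x := by
    show Matrix.toEuclideanLin R⁻¹ (Matrix.toEuclideanLin R x) = x
    rw [show Matrix.toEuclideanLin R⁻¹ (Matrix.toEuclideanLin R x)
        = Matrix.toEuclideanLin (R⁻¹ * R) x from by
      rw [Matrix.toEuclideanLin_apply, Matrix.toEuclideanLin_apply,
        Matrix.toEuclideanLin_apply]
      congr 1
      rw [show (WithLp.toLp 2 (R *ᵥ x.ofLp)).ofLp = R *ᵥ x.ofLp from rfl]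
      rw [Matrix.mulVec_mulVec]]
    rw [hRinv, hR]
    simp [Matrix.toEuclideanLin_apply, Matrix.one_mulVec]
  have herr : x - S • Matrix.toEuclideanLin R⁻¹ Qv
      = Matrix.toEuclideanLin R⁻¹ (Rx - S • Qv) := by
    simp only [map_sub, _root_.map_smul, hRinvRx]
  -- compute the squared error
  have hnum : ‖x - S • Matrix.toEuclideanLin R⁻¹ Qv‖ ^ 2
      = d * ‖x‖ ^ 4 / L ^ 2 - ‖x‖ ^ 2 := by
    rw [herr, norm_toEuclideanLin R⁻¹ hRinvOrtho, norm_sub_sq_real, hnRx,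
      real_inner_smul_right, hinner, norm_smul, mul_pow, hQv]
    have hS : S = ‖x‖ ^ 2 / (ψ * L) := by
      show ‖x‖ ^ 2 / ⟪Rx, Qv⟫ = _
      rw [hinner]
    rw [hS]
    have h2 : ‖S‖ = |‖x‖ ^ 2 / (ψ * L)| := by rw [hS]; rfl
    rw [show ‖(‖x‖ ^ 2 / (ψ * L))‖ ^ 2 = (‖x‖ ^ 2 / (ψ * L)) ^ 2 from by
      rw [Real.norm_eq_abs, sq_abs]]
    field_simp
    ring
  constructor
  · rw [hnum]
    field_simp
  · have hT : ∑ i : Fin d, |T i| = ‖x‖⁻¹ * L := by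
      rw [hL, Finset.mul_sum]
      refine Finset.sum_congr rfl fun i _ => ?_
      show |(‖x‖⁻¹ • Rx) i| = _
      rw [PiLp.smul_apply, smul_eq_mul, abs_mul, abs_of_nonneg (by positivity)]
    rw [hnum, hT]
    rw [mul_pow]
    have : (‖x‖⁻¹) ^ 2 = (‖x‖ ^ 2)⁻¹ := by rw [inv_pow]
    field_simp
end

section
/- In the setting of the unbiasedness theorem, fix x ∈ R^d and let x' = (||x||_2, 0, …, 0)^T and R_{x→x'} a fixed rotation with R_{x→x'}x = x'. Writing R_x = R·R_{x→x'}^{-1} with columns C_0,…,C_{d−1}, the DRIVE estimate equals x̂ = R_{x→x'}^{-1} · ||x||_2 · (1, ⟨C_1, Q(||x||_2 C_0)⟩/⟨C_0, Q(||x||_2 C_0)⟩, …, ⟨C_{d−1}, Q(||x||_2 C_0)⟩/⟨C_0, Q(||x||_2 C_0)⟩)^T. -/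
open Matrix RealInnerProductSpace

theorem drive_column_representation (d : ℕ) (hd : 0 < d)
    (R : Matrix (Fin d) (Fin d) ℝ) (hR : Rᵀ * R = 1)
    (Rxx' : Matrix (Fin d) (Fin d) ℝ) (hRxx' : Rxx'ᵀ * Rxx' = 1)
    (x : EuclideanSpace ℝ (Fin d))
    (hx' : Matrix.toEuclideanLin Rxx' x =
      (WithLp.toLp 2 (fun j => if j = (⟨0, hd⟩ : Fin d) then ‖x‖ else 0) : EuclideanSpace ℝ (Fin d)))
    (Q : EuclideanSpace ℝ (Fin d) → EuclideanSpace ℝ (Fin d))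
    (hip : ⟪Matrix.toEuclideanLin R x, Q (Matrix.toEuclideanLin R x)⟫ ≠ 0) :
    let Rx : Matrix (Fin d) (Fin d) ℝ := R * Rxx'⁻¹
    let C : Fin d → EuclideanSpace ℝ (Fin d) := fun i => WithLp.toLp 2 (fun j => Rx j i)
    let S : ℝ := ‖x‖ ^ 2 / ⟪Matrix.toEuclideanLin R x, Q (Matrix.toEuclideanLin R x)⟫
    S • Matrix.toEuclideanLin R⁻¹ (Q (Matrix.toEuclideanLin R x)) =
      Matrix.toEuclideanLin Rxx'⁻¹
        (‖x‖ • (WithLp.toLp 2 (fun j => if j = (⟨0, hd⟩ : Fin d) then 1 else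
          ⟪C j, Q (‖x‖ • C ⟨0, hd⟩)⟫ / ⟪C ⟨0, hd⟩, Q (‖x‖ • C ⟨0, hd⟩)⟫) :
            EuclideanSpace ℝ (Fin d))) := by
  intro Rx C S
  have hRinv : R⁻¹ = Rᵀ := Matrix.inv_eq_left_inv hR
  have hRxinv : Rxx'⁻¹ = Rxx'ᵀ := Matrix.inv_eq_left_inv hRxx'
  have hmul : Rx * Rxx' = R := by
    simp only [Rx, hRxinv, Matrix.mul_assoc, hRxx', Matrix.mul_one]
  -- R x = ‖x‖ • C 0
  have hcol : Matrix.toEuclideanLin R x = ‖x‖ • C ⟨0, hd⟩ := by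
    have h1 : Matrix.toEuclideanLin R x
        = Matrix.toEuclideanLin Rx (Matrix.toEuclideanLin Rxx' x) := by
      rw [← hmul]
      simp [Matrix.toEuclideanLin_apply, Matrix.mulVec_mulVec]
    rw [h1, hx']
    ext j
    simp only [Matrix.toEuclideanLin_apply, PiLp.smul_apply, smul_eq_mul]
    show (Rx *ᵥ fun j => if j = (⟨0, hd⟩ : Fin d) then ‖x‖ else 0) j = ‖x‖ * Rx j ⟨0, hd⟩
    simp [Matrix.mulVec, dotProduct, mul_ite, mul_comm]
  set q : EuclideanSpace ℝ (Fin d) := Q (Matrix.toEuclideanLin R x) with hq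
  have hQeq : Q (‖x‖ • C ⟨0, hd⟩) = q := by rw [hq, hcol]
  have hinner : ⟪Matrix.toEuclideanLin R x, q⟫ = ‖x‖ * ⟪C ⟨0, hd⟩, q⟫ := by
    rw [hcol, real_inner_smul_left]
  have hnx : ‖x‖ ≠ 0 := by
    intro h; apply hip; rw [hinner, h, zero_mul]
  have hC0 : ⟪C ⟨0, hd⟩, q⟫ ≠ 0 := by
    intro h; apply hip; rw [hinner, h, mul_zero]
  have hS : S = ‖x‖ / ⟪C ⟨0, hd⟩, q⟫ := by
    simp only [S, ← hq, hinner, pow_two]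
    rw [mul_div_mul_left _ _ hnx]
  -- reduce via applying Rxx'
  have hcomp : ∀ y : EuclideanSpace ℝ (Fin d),
      Matrix.toEuclideanLin Rxx'⁻¹ (Matrix.toEuclideanLin Rxx' y) = y := by
    intro y
    simp [Matrix.toEuclideanLin_apply, Matrix.mulVec_mulVec, hRxinv, hRxx']
  rw [show S • Matrix.toEuclideanLin R⁻¹ q
      = Matrix.toEuclideanLin Rxx'⁻¹
        (Matrix.toEuclideanLin Rxx' (S • Matrix.toEuclideanLin R⁻¹ q)) from (hcomp _).symm]
  congr 1
  ext j
  have hentry : (Matrix.toEuclideanLin Rxx' (S • Matrix.toEuclideanLin R⁻¹ q)) j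
      = S * ((Rxx' * Rᵀ) *ᵥ fun k => q k) j := by
    rw [hRinv]
    show (Rxx' *ᵥ (S • (Rᵀ *ᵥ fun k => q k))) j = _
    rw [Matrix.mulVec_smul, Matrix.mulVec_mulVec]
    rfl
  have hRxT : Rxx' * Rᵀ = Rxᵀ := by
    simp [Rx, hRxinv, Matrix.transpose_mul]
  have hCj : ∀ i : Fin d, (Rxᵀ *ᵥ fun k => q k) i = ⟪C i, q⟫ := by
    intro i
    simp [Matrix.mulVec, dotProduct, PiLp.inner_apply, C, mul_comm]
  rw [hentry, hRxT]
  show S * (Rxᵀ *ᵥ fun k => q k) j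
      = ‖x‖ * (if j = (⟨0, hd⟩ : Fin d) then 1 else
          ⟪C j, Q (‖x‖ • C ⟨0, hd⟩)⟫ / ⟪C ⟨0, hd⟩, Q (‖x‖ • C ⟨0, hd⟩)⟫)
  rw [hCj, hQeq, hS]
  by_cases h : j = (⟨0, hd⟩ : Fin d)
  · subst h; rw [if_pos rfl, mul_one, div_mul_cancel₀ _ hC0]
  · rw [if_neg h, div_mul_eq_mul_div, mul_div_assoc]
end
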